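/- Let n ≥ 3, 1 ≤ j < ⌊n/2⌋, and let A = G(n; ±{1, …, j}) be the circulant graph. Then for 1 ≤ l ≤ n, the number of edges in a maximum subgraph of A on l vertices is ξ, where ξ = l(l−1)/2 if l ≤ j+1; ξ = l·j − j(j+1)/2 if j+1 < l ≤ n−j; and ξ = (1/2)·((n−l)² + (4j+1)·l − (2j+1)·n) if n−j < l ≤ n. That is, I_A(l) = ξ. -/

import Mathlib

open scoped Classical

/-- Number of edges of `G` with both endpoints in `S`. -/
noncomputable def interiorCount {V : Type*} [Fintype V] (G : SimpleGraph V)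
    (S : Finset V) : ℕ :=
  (G.edgeFinset.filter (fun e => ∀ v ∈ e, v ∈ S)).card

/-- `I_G(m)`: maximum number of interior edges over all `m`-subsets. -/
noncomputable def maxSub {V : Type*} [Fintype V] (G : SimpleGraph V) (m : ℕ) : ℕ :=
  sSup {c | ∃ S : Finset V, S.card = m ∧ c = interiorCount G S}

/-- The circulant graph `G(n; ±{1, …, j})` on the vertex set `ZMod n`:
`u` and `v` are adjacent iff `u − v ≡ ±t (mod n)` for some `1 ≤ t ≤ j`. -/
def circulantGraph (n j : ℕ) : SimpleGraph (ZMod n) :=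
  SimpleGraph.fromRel (fun u v => ∃ t : ℕ, 1 ≤ t ∧ t ≤ j ∧ u - v = (t : ZMod n))

open Finset

namespace Circ

/-- The set of "forward step" elements. -/
def T (n j : ℕ) : Finset (ZMod n) := (Finset.Icc 1 j).image (Nat.cast)

lemma mem_T {n j : ℕ} {x : ZMod n} :
    x ∈ T n j ↔ ∃ t : ℕ, 1 ≤ t ∧ t ≤ j ∧ x = (t : ZMod n) := by
  simp only [T, mem_image, mem_Icc]
  constructor
  · rintro ⟨t, ⟨h1, h2⟩, rfl⟩; exact ⟨t, h1, h2, rfl⟩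
  · rintro ⟨t, h1, h2, rfl⟩; exact ⟨t, ⟨h1, h2⟩, rfl⟩

lemma cast_inj_of_lt {n a b : ℕ} [NeZero n] (ha : a < n) (hb : b < n)
    (h : (a : ZMod n) = (b : ZMod n)) : a = b := by
  have := congrArg ZMod.val h
  rwa [ZMod.val_cast_of_lt ha, ZMod.val_cast_of_lt hb] at this

lemma T_card {n j : ℕ} [NeZero n] (hj : j < n) : (T n j).card = j := by
  have hinj : Set.InjOn (Nat.cast : ℕ → ZMod n) (Finset.Icc 1 j) := by
    intro a ha b hb hab
    simp only [coe_Icc, Set.mem_Icc] at ha hb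
    exact cast_inj_of_lt (by omega) (by omega) hab
  rw [T, Finset.card_image_of_injOn hinj, Nat.card_Icc]
  omega

lemma zero_not_mem_T {n j : ℕ} [NeZero n] (hj : j < n) : (0 : ZMod n) ∉ T n j := by
  rw [mem_T]
  rintro ⟨t, h1, h2, ht⟩
  have ht' : ((0 : ℕ) : ZMod n) = (t : ZMod n) := by exact_mod_cast ht
  have := cast_inj_of_lt (by omega) (by omega) ht'
  omega

lemma neg_not_mem_T {n j : ℕ} [NeZero n] (hj : 2 * j < n) {x : ZMod n}
    (hx : x ∈ T n j) : -x ∉ T n j := by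
  rw [mem_T] at hx ⊢
  rintro ⟨s, hs1, hs2, hsx⟩
  obtain ⟨t, ht1, ht2, rfl⟩ := hx
  have h0 : ((t + s : ℕ) : ZMod n) = ((0 : ℕ) : ZMod n) := by
    push_cast
    rw [← hsx]; ring
  have := cast_inj_of_lt (by omega) (by omega) h0
  omega

/-- Number of ordered "forward-close" pairs inside `S`. -/
noncomputable def eS (n j : ℕ) (S : Finset (ZMod n)) : ℕ :=
  ((S ×ˢ S).filter (fun p => p.2 - p.1 ∈ T n j)).card


lemma eS_le_offDiag {n j : ℕ} [NeZero n] (hj : 2 * j < n) (S : Finset (ZMod n)) :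
    2 * eS n j S ≤ S.card * (S.card - 1) := by
  classical
  set F := ((S ×ˢ S).filter (fun p => p.2 - p.1 ∈ T n j)) with hF
  have hswap : (F.image Prod.swap).card = F.card :=
    Finset.card_image_of_injective _ Prod.swap_injective
  have hdisj : Disjoint F (F.image Prod.swap) := by
    rw [Finset.disjoint_left]
    intro p hp hp'
    simp only [hF, Finset.mem_image, Finset.mem_filter, Finset.mem_product] at hp hp'
    obtain ⟨q, ⟨hq, hqT⟩, rfl⟩ := hp'
    have : q.2 - q.1 = -(q.1 - q.2) := by ring
    rw [this] at hqT
    exact neg_not_mem_T hj hp.2 hqT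
  have hsub : F ∪ F.image Prod.swap ⊆ S.offDiag := by
    intro p hp
    rw [Finset.mem_union] at hp
    have key : ∀ q ∈ F, q ∈ S.offDiag := by
      intro q hq
      simp only [hF, Finset.mem_filter, Finset.mem_product] at hq
      rw [Finset.mem_offDiag]
      refine ⟨hq.1.1, hq.1.2, ?_⟩
      intro hEq
      rw [hEq] at hq
      have : q.2 - q.2 = 0 := sub_self _
      rw [this] at hq
      exact zero_not_mem_T (by omega) hq.2
    rcases hp with hp | hp
    · exact key p hp
    · simp only [Finset.mem_image] at hp
      obtain ⟨q, hq, rfl⟩ := hp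
      have := key q hq
      rw [Finset.mem_offDiag] at this ⊢
      exact ⟨this.2.1, this.1, fun h => this.2.2 h.symm⟩
  have := Finset.card_le_card hsub
  rw [Finset.card_union_of_disjoint hdisj, hswap, Finset.offDiag_card] at this
  have heS : eS n j S = F.card := rfl
  have hc : S.card * S.card - S.card = S.card * (S.card - 1) := by
    cases' S.card with k
    · simp
    · simp [Nat.succ_sub_one, Nat.mul_sub, Nat.mul_succ]
  omega

lemma eS_shift {n j : ℕ} (S : Finset (ZMod n)) (c : ZMod n) :
    eS n j (S.image (· + c)) = eS n j S := by
  classical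
  unfold eS
  apply Finset.card_bij (fun p _ => (p.1 - c, p.2 - c))
  · rintro ⟨u, v⟩ hp
    simp only [Finset.mem_filter, Finset.mem_product, Finset.mem_image] at hp ⊢
    obtain ⟨⟨⟨a, ha, hau⟩, ⟨b, hb, hbv⟩⟩, hT⟩ := hp
    subst hau hbv
    simp only [add_sub_cancel_right]
    refine ⟨⟨ha, hb⟩, ?_⟩
    have : b - a = b + c - (a + c) := by ring
    rw [this]; exact hT
  · rintro ⟨u, v⟩ hp ⟨u', v'⟩ hp' h
    simp only [Prod.mk.injEq] at h ⊢
    exact ⟨by linear_combination h.1, by linear_combination h.2⟩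
  · rintro ⟨u, v⟩ hp
    refine ⟨(u + c, v + c), ?_, by simp⟩
    simp only [Finset.mem_filter, Finset.mem_product, Finset.mem_image] at hp ⊢
    refine ⟨⟨⟨u, hp.1.1, rfl⟩, ⟨v, hp.1.2, rfl⟩⟩, ?_⟩
    have : v + c - (u + c) = v - u := by ring
    rw [this]; exact hp.2


lemma card_prod_univ_right {n j : ℕ} [NeZero n] (hj : j < n) (X : Finset (ZMod n)) :
    ((X ×ˢ Finset.univ).filter (fun p => p.2 - p.1 ∈ T n j)).card = X.card * j := by
  classical
  have : ((X ×ˢ Finset.univ).filter (fun p => p.2 - p.1 ∈ T n j)).card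
      = (X ×ˢ T n j).card := by
    apply Finset.card_bij (fun p _ => (p.1, p.2 - p.1))
    · rintro ⟨u, v⟩ hp
      simp only [Finset.mem_filter, Finset.mem_product] at hp ⊢
      exact ⟨hp.1.1, hp.2⟩
    · rintro ⟨u, v⟩ hp ⟨u', v'⟩ hp' h
      simp only [Prod.mk.injEq] at h ⊢
      obtain ⟨h1, h2⟩ := h
      subst h1
      exact ⟨rfl, by linear_combination h2⟩
    · rintro ⟨u, t⟩ hp
      simp only [Finset.mem_product] at hp
      refine ⟨(u, u + t), ?_, by simp⟩
      simp only [Finset.mem_filter, Finset.mem_product]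
      exact ⟨⟨hp.1, Finset.mem_univ _⟩, by simpa using hp.2⟩
  rw [this, Finset.card_product, T_card hj]

lemma card_prod_univ_left {n j : ℕ} [NeZero n] (hj : j < n) (Y : Finset (ZMod n)) :
    ((Finset.univ ×ˢ Y).filter (fun p => p.2 - p.1 ∈ T n j)).card = Y.card * j := by
  classical
  have : ((Finset.univ ×ˢ Y).filter (fun p => p.2 - p.1 ∈ T n j)).card
      = (Y ×ˢ T n j).card := by
    apply Finset.card_bij (fun p _ => (p.2, p.2 - p.1))
    · rintro ⟨u, v⟩ hp
      simp only [Finset.mem_filter, Finset.mem_product] at hp ⊢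
      exact ⟨hp.1.2, hp.2⟩
    · rintro ⟨u, v⟩ hp ⟨u', v'⟩ hp' h
      simp only [Prod.mk.injEq] at h ⊢
      obtain ⟨h1, h2⟩ := h
      subst h1
      exact ⟨by linear_combination -h2, rfl⟩
    · rintro ⟨v, t⟩ hp
      simp only [Finset.mem_product] at hp
      refine ⟨(v - t, v), ?_, by simp⟩
      simp only [Finset.mem_filter, Finset.mem_product]
      exact ⟨⟨Finset.mem_univ _, hp.1⟩, by simpa using hp.2⟩
  rw [this, Finset.card_product, T_card hj]

lemma eS_compl {n j : ℕ} [NeZero n] (hj : j < n) (S : Finset (ZMod n)) :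
    eS n j S + Sᶜ.card * j = eS n j Sᶜ + S.card * j := by
  classical
  set q : ZMod n × ZMod n → Prop := fun p => p.2 - p.1 ∈ T n j with hq
  have splitA : ((S ×ˢ Finset.univ).filter q).card
      = eS n j S + ((S ×ˢ Sᶜ).filter q).card := by
    rw [eS]
    rw [← Finset.card_union_of_disjoint]
    · congr 1
      ext p
      simp only [Finset.mem_union, Finset.mem_filter, Finset.mem_product,
        Finset.mem_univ, Finset.mem_compl, hq]
      tauto
    · rw [Finset.disjoint_left]
      intro p hp hp'
      simp only [Finset.mem_filter, Finset.mem_product, Finset.mem_compl] at hp hp'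
      exact hp'.1.2 hp.1.2
  have splitB : ((Finset.univ ×ˢ Sᶜ).filter q).card
      = eS n j Sᶜ + ((S ×ˢ Sᶜ).filter q).card := by
    rw [eS]
    rw [← Finset.card_union_of_disjoint]
    · congr 1
      ext p
      simp only [Finset.mem_union, Finset.mem_filter, Finset.mem_product,
        Finset.mem_univ, Finset.mem_compl, hq]
      by_cases h : p.1 ∈ S <;> tauto
    · rw [Finset.disjoint_left]
      intro p hp hp'
      simp only [Finset.mem_filter, Finset.mem_product, Finset.mem_compl] at hp hp'
      exact hp.1.1 hp'.1.1
  have hA : ((S ×ˢ Finset.univ).filter q).card = S.card * j :=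
    card_prod_univ_right hj S
  have hB : ((Finset.univ ×ˢ Sᶜ).filter q).card = Sᶜ.card * j :=
    card_prod_univ_left hj Sᶜ
  omega


lemma interiorCount_eq {n j : ℕ} [NeZero n] (hj : 2 * j < n) (S : Finset (ZMod n)) :
    interiorCount (circulantGraph n j) S = eS n j S := by
  classical
  unfold interiorCount eS
  symm
  refine Finset.card_bij (fun (p : ZMod n × ZMod n) _ => Sym2.mk p.1 p.2) ?_ ?_ ?_
  · rintro ⟨u, v⟩ hp
    simp only [Finset.mem_filter, Finset.mem_product] at hp
    obtain ⟨⟨hu, hv⟩, hT⟩ := hp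
    simp only [Finset.mem_filter, SimpleGraph.mem_edgeFinset, SimpleGraph.mem_edgeSet]
    constructor
    · rw [circulantGraph, SimpleGraph.fromRel_adj]
      constructor
      · intro hEq
        rw [hEq, sub_self] at hT
        exact zero_not_mem_T (by omega) hT
      · right
        rw [mem_T] at hT
        obtain ⟨t, h1, h2, h3⟩ := hT
        exact ⟨t, h1, h2, h3⟩
    · intro w hw
      rw [Sym2.mem_iff] at hw
      rcases hw with rfl | rfl
      · exact hu
      · exact hv
  · rintro ⟨u, v⟩ hp ⟨u', v'⟩ hp' h
    simp only [Sym2.eq_iff, Prod.mk.injEq, Prod.swap_prod_mk] at h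
    rcases h with ⟨rfl, rfl⟩ | ⟨h1, h2⟩
    · rfl
    · exfalso
      subst h1; subst h2
      simp only [Finset.mem_filter, Finset.mem_product] at hp hp'
      have hA := hp.2
      have hB := hp'.2
      have hE : (u, v).1 - (u, v).2 = -((u, v).2 - (u, v).1) := by ring
      rw [hE] at hB
      exact neg_not_mem_T hj hA hB
  · intro e he
    induction e with
    | _ u v =>
      simp only [Finset.mem_filter, SimpleGraph.mem_edgeFinset, SimpleGraph.mem_edgeSet] at he
      obtain ⟨hadj, hmem⟩ := he
      have hu : u ∈ S := hmem u (by simp)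
      have hv : v ∈ S := hmem v (by simp)
      rw [circulantGraph, SimpleGraph.fromRel_adj] at hadj
      obtain ⟨hne, hor⟩ := hadj
      rcases hor with h | h
      · refine ⟨(v, u), ?_, ?_⟩
        · simp only [Finset.mem_filter, Finset.mem_product]
          refine ⟨⟨hv, hu⟩, ?_⟩
          rw [mem_T]
          obtain ⟨t, h1, h2, h3⟩ := h
          exact ⟨t, h1, h2, h3⟩
        · exact Sym2.eq_swap
      · refine ⟨(u, v), ?_, rfl⟩
        simp only [Finset.mem_filter, Finset.mem_product]
        refine ⟨⟨hu, hv⟩, ?_⟩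
        rw [mem_T]
        obtain ⟨t, h1, h2, h3⟩ := h
        exact ⟨t, h1, h2, h3⟩


lemma contract_aux {n j : ℕ} [NeZero n] (hn : 3 ≤ n) (hj : 2 * j < n)
    {S : Finset (ZMod n)} (hS : (((n - 1 : ℕ)) : ZMod n) ∉ S)
    {u v : ZMod n} (hu : u ∈ S) (hv : v ∈ S) (hT : v - u ∈ T n j) :
    ((v.val : ZMod (n-1)) : ZMod (n-1)) - ((u.val : ℕ) : ZMod (n-1)) ∈ T (n-1) j := by
  haveI : NeZero (n - 1) := ⟨by omega⟩
  obtain ⟨t, ht1, ht2, ht3⟩ := mem_T.mp hT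
  obtain ⟨a, ha⟩ : ∃ a, u.val = a := ⟨_, rfl⟩
  obtain ⟨b, hb⟩ : ∃ b, v.val = b := ⟨_, rfl⟩
  have hva : a < n := ha ▸ ZMod.val_lt u
  have hvb : b < n := hb ▸ ZMod.val_lt v
  have hcu : ((a : ℕ) : ZMod n) = u := by rw [← ha]; exact ZMod.natCast_zmod_val u
  have hcv : ((b : ℕ) : ZMod n) = v := by rw [← hb]; exact ZMod.natCast_zmod_val v
  have hane : a ≠ n - 1 := by
    intro h; apply hS; rw [← h, hcu]; exact hu
  have hbne : b ≠ n - 1 := by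
    intro h; apply hS; rw [← h, hcv]; exact hv
  have hcast : ((b : ℕ) : ZMod n) = ((a + t : ℕ) : ZMod n) := by
    push_cast
    rw [hcu, hcv]
    linear_combination ht3
  have hmod : b % n = (a + t) % n := (ZMod.natCast_eq_natCast_iff _ _ _).mp hcast
  have hbmod : b % n = b := Nat.mod_eq_of_lt hvb
  obtain ⟨q, hqdef⟩ : ∃ q, (a + t) / n = q := ⟨_, rfl⟩
  obtain ⟨r, hrdef⟩ : ∃ r, (a + t) % n = r := ⟨_, rfl⟩
  have hdm : n * q + r = a + t := by rw [← hqdef, ← hrdef]; exact Nat.div_add_mod (a+t) n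
  have hrb : r = b := by omega
  have hrlt : r < n := by rw [← hrdef]; exact Nat.mod_lt _ (by omega)
  have h2n : n * q < n * 2 := by omega
  have hq01 : q = 0 ∨ q = 1 := by
    have := Nat.lt_of_mul_lt_mul_left h2n
    omega
  rw [mem_T]
  rcases hq01 with h0 | h1
  · -- b = a + t
    rw [h0, Nat.mul_zero, Nat.zero_add] at hdm
    have hq : a + t = b := by omega
    refine ⟨t, ht1, ht2, ?_⟩
    rw [ha, hb, ← hq]
    push_cast
    ring
  · -- a + t = n + b
    rw [h1, Nat.mul_one] at hdm
    have hq : a + t = n + b := by omega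
    have ht2' : 2 ≤ t := by omega
    refine ⟨t - 1, by omega, by omega, ?_⟩
    have hnat : b + (n - 1) = a + (t - 1) := by omega
    have hcc : ((b + (n-1) : ℕ) : ZMod (n-1)) = ((a + (t-1) : ℕ) : ZMod (n-1)) := by
      rw [hnat]
    push_cast at hcc
    rw [ZMod.natCast_self] at hcc
    rw [ha, hb]
    linear_combination hcc

lemma val_cast_injOn_contract {n : ℕ} [NeZero n] (hn : 3 ≤ n)
    {S : Finset (ZMod n)} (hS : (((n - 1 : ℕ)) : ZMod n) ∉ S) :
    Set.InjOn (fun u : ZMod n => ((u.val : ℕ) : ZMod (n-1))) S := by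
  haveI : NeZero (n - 1) := ⟨by omega⟩
  intro u hu v hv h
  simp only at h
  have hune : u.val ≠ n - 1 := by
    intro hEq
    apply hS
    rw [← hEq, ZMod.natCast_zmod_val]
    exact hu
  have hvne : v.val ≠ n - 1 := by
    intro hEq
    apply hS
    rw [← hEq, ZMod.natCast_zmod_val]
    exact hv
  have h1 : u.val < n := ZMod.val_lt u
  have h2 : v.val < n := ZMod.val_lt v
  have := cast_inj_of_lt (n := n - 1) (by omega) (by omega) h
  rw [← ZMod.natCast_zmod_val u, ← ZMod.natCast_zmod_val v, this]

lemma eS_contract {n j : ℕ} [NeZero n] (hn : 3 ≤ n) (hj : 2 * j < n)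
    {S : Finset (ZMod n)} (hS : (((n - 1 : ℕ)) : ZMod n) ∉ S) :
    eS n j S ≤ eS (n-1) j (S.image (fun u => ((u.val : ℕ) : ZMod (n-1)))) := by
  classical
  unfold eS
  apply Finset.card_le_card_of_injOn
    (fun p => (((p.1.val : ℕ) : ZMod (n-1)), ((p.2.val : ℕ) : ZMod (n-1))))
  · rintro ⟨u, v⟩ hp
    simp only [Finset.mem_coe, Finset.mem_filter, Finset.mem_product, Finset.mem_image] at hp ⊢
    obtain ⟨⟨hu, hv⟩, hT⟩ := hp
    exact ⟨⟨⟨u, hu, rfl⟩, ⟨v, hv, rfl⟩⟩, contract_aux hn hj hS hu hv hT⟩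
  · rintro ⟨u, v⟩ hp ⟨u', v'⟩ hp' h
    simp only [Finset.mem_coe, Finset.mem_filter, Finset.mem_product] at hp hp'
    simp only [Prod.mk.injEq] at h ⊢
    exact ⟨val_cast_injOn_contract hn hS hp.1.1 hp'.1.1 h.1,
      val_cast_injOn_contract hn hS hp.1.2 hp'.1.2 h.2⟩

lemma card_contract {n : ℕ} [NeZero n] (hn : 3 ≤ n)
    {S : Finset (ZMod n)} (hS : (((n - 1 : ℕ)) : ZMod n) ∉ S) :
    (S.image (fun u => ((u.val : ℕ) : ZMod (n-1)))).card = S.card :=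
  Finset.card_image_of_injOn (val_cast_injOn_contract hn hS)


lemma main_ub (n : ℕ) : ∀ j : ℕ, ∀ S : Finset (ZMod n), 1 ≤ j → 2*j < n →
    j ≤ S.card → S.card + j ≤ n →
    2 * eS n j S + j * (j+1) ≤ 2 * (j * S.card) := by
  induction n using Nat.strong_induction_on with
  | _ n IH =>
    intro j S hj1 hjn hl1 hl2
    haveI : NeZero n := ⟨by omega⟩
    by_cases hc1 : S.card ≤ j + 1
    · -- small case
      have hE := eS_le_offDiag hjn S
      have hcases : S.card = j ∨ S.card = j + 1 := by omega
      rcases hcases with h | h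
      · rw [h] at hE ⊢
        have hr : j * (j - 1) + j * (j+1) = 2 * (j * j) := by
          cases' j with k
          · simp
          · simp only [Nat.succ_sub_one]
            ring
        linarith
      · rw [h] at hE ⊢
        have hr : (j+1) * ((j+1) - 1) + j * (j+1) = 2 * (j * (j+1)) := by
          simp only [Nat.add_sub_cancel]
          ring
        linarith
    · by_cases hc2 : S.card + j = n
      · -- complement has size exactly j
        have hm : Sᶜ.card = j := by
          rw [Finset.card_compl, ZMod.card]
          omega
        have hid := eS_compl (by omega : j < n) S
        have hE := eS_le_offDiag hjn Sᶜ
        rw [hm] at hid hE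
        have hr : j * j = j * (j - 1) + j := by
          cases' j with k
          · simp
          · simp only [Nat.succ_sub_one]
            ring
        have hr2 : j * S.card = S.card * j := Nat.mul_comm _ _
        linarith
      · -- recurse
        have hn3 : 3 ≤ n := by omega
        have hlt : S.card + j < n := by omega
        have hcompl : Sᶜ.Nonempty := by
          rw [← Finset.card_pos, Finset.card_compl, ZMod.card]
          omega
        obtain ⟨x, hx⟩ := hcompl
        have hxS : x ∉ S := Finset.mem_compl.mp hx
        set c : ZMod n := (((n - 1 : ℕ)) : ZMod n) - x with hc
        set S₂ := S.image (· + c) with hS₂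
        have hx2 : (((n - 1 : ℕ)) : ZMod n) ∉ S₂ := by
          intro h
          rw [hS₂, Finset.mem_image] at h
          obtain ⟨y, hy, hEq⟩ := h
          have : y = x := by
            rw [hc] at hEq
            linear_combination hEq
          rw [this] at hy
          exact hxS hy
        have hcard2 : S₂.card = S.card :=
          Finset.card_image_of_injective _ (add_left_injective c)
        have hshift : eS n j S₂ = eS n j S := eS_shift S c
        set S₃ := S₂.image (fun u : ZMod n => ((u.val : ℕ) : ZMod (n-1))) with hS₃
        have hcontr : eS n j S₂ ≤ eS (n-1) j S₃ := eS_contract hn3 hjn hx2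
        have hcard3 : S₃.card = S.card := by
          rw [hS₃, card_contract hn3 hx2, hcard2]
        have hIH := IH (n-1) (by omega) j S₃ hj1 (by omega)
          (by omega) (by omega)
        rw [hcard3] at hIH
        omega


/-- The interval `{0, 1, …, k-1}` in `ZMod n`. -/
def Ival (n k : ℕ) : Finset (ZMod n) := (Finset.range k).image (Nat.cast)

lemma mem_Ival {n k : ℕ} [NeZero n] (hk : k ≤ n) {x : ZMod n} :
    x ∈ Ival n k ↔ x.val < k := by
  rw [Ival, Finset.mem_image]
  constructor
  · rintro ⟨a, ha, rfl⟩
    rw [Finset.mem_range] at ha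
    rw [ZMod.val_cast_of_lt (by omega)]
    exact ha
  · intro h
    exact ⟨x.val, Finset.mem_range.mpr h, ZMod.natCast_zmod_val x⟩

lemma Ival_card {n k : ℕ} [NeZero n] (hk : k ≤ n) : (Ival n k).card = k := by
  rw [Ival, Finset.card_image_of_injOn, Finset.card_range]
  intro a ha b hb h
  simp only [Finset.coe_range, Set.mem_Iio] at ha hb
  exact cast_inj_of_lt (by omega) (by omega) h

lemma sum_Icc_formula (l k : ℕ) (h : k < l) :
    (∑ t ∈ Finset.Icc 1 k, (l - t)) * 2 + k * (k+1) = 2 * (l * k) := by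
  induction k with
  | zero => simp
  | succ k ihk =>
    have hk : k < l := by omega
    have := ihk hk
    rw [Finset.sum_Icc_succ_top (by omega : 1 ≤ k + 1)]
    have h1 : (k+1) * (k+1+1) = k * (k+1) + 2 * (k+1) := by ring
    have h2 : 2 * (l * (k+1)) = 2 * (l * k) + 2 * l := by ring
    omega

lemma eS_Ival_lb {n j l k : ℕ} [NeZero n] (hkj : k ≤ j) (hkl : k < l) (hln : l ≤ n) :
    2 * (l * k) ≤ 2 * eS n j (Ival n l) + k * (k+1) := by
  classical
  set B : Finset (ℕ × ℕ) :=
    (Finset.Icc 1 k).biUnion (fun t => (Finset.range (l - t)).image (fun a => (a, a + t)))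
    with hB
  have hBcard : B.card = ∑ t ∈ Finset.Icc 1 k, (l - t) := by
    rw [hB, Finset.card_biUnion]
    · apply Finset.sum_congr rfl
      intro t ht
      rw [Finset.card_image_of_injective, Finset.card_range]
      intro a b hab
      simpa using congrArg Prod.fst hab
    · intro t ht t' ht' htt'
      simp only [Function.onFun]
      rw [Finset.disjoint_left]
      rintro ⟨a, b⟩ hab hab'
      simp only [Finset.mem_image, Finset.mem_range, Prod.mk.injEq] at hab hab'
      obtain ⟨a1, h1, rfl, rfl⟩ := hab
      obtain ⟨a2, h2, rfl, h3⟩ := hab'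
      omega
  have hmap : B.card ≤ eS n j (Ival n l) := by
    rw [eS]
    apply Finset.card_le_card_of_injOn (fun p => ((p.1 : ZMod n), (p.2 : ZMod n)))
    · rintro ⟨a, b⟩ hab
      simp only [hB, Finset.mem_coe, Finset.mem_biUnion, Finset.mem_image, Finset.mem_range,
        Finset.mem_Icc, Prod.mk.injEq] at hab
      obtain ⟨t, ⟨ht1, ht2⟩, a', ha', rfl, rfl⟩ := hab
      simp only [Finset.mem_coe, Finset.mem_filter, Finset.mem_product]
      have hmem1 : ((a' : ℕ) : ZMod n) ∈ Ival n l := by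
        rw [mem_Ival hln, ZMod.val_cast_of_lt (by omega)]
        omega
      have hmem2 : ((a' + t : ℕ) : ZMod n) ∈ Ival n l := by
        rw [mem_Ival hln, ZMod.val_cast_of_lt (by omega)]
        omega
      refine ⟨⟨hmem1, by exact_mod_cast hmem2⟩, ?_⟩
      rw [mem_T]
      refine ⟨t, ht1, by omega, ?_⟩
      push_cast
      ring
    · rintro ⟨a, b⟩ hab ⟨a', b'⟩ hab' h
      simp only [hB, Finset.mem_coe, Finset.mem_biUnion, Finset.mem_image,
        Finset.mem_range, Finset.mem_Icc, Prod.mk.injEq] at hab hab'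
      obtain ⟨t, ⟨ht1, ht2⟩, a1, h1, rfl, rfl⟩ := hab
      obtain ⟨t', ⟨ht1', ht2'⟩, a2, h2, rfl, rfl⟩ := hab'
      simp only [Prod.mk.injEq] at h ⊢
      have e1 : a1 = a2 := cast_inj_of_lt (by omega) (by omega) h.1
      have e2 : a1 + t = a2 + t' := cast_inj_of_lt (by omega) (by omega) h.2
      exact ⟨e1, by omega⟩
  have := sum_Icc_formula l k hkl
  omega


lemma compl_Ival {n l : ℕ} [NeZero n] (hl : l ≤ n) :
    (Ival n l)ᶜ = (Ival n (n - l)).image (· + (l : ZMod n)) := by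
  ext x
  rw [Finset.mem_compl, mem_Ival hl, Finset.mem_image]
  constructor
  · intro h
    push_neg at h
    have hx : x.val < n := ZMod.val_lt x
    refine ⟨((x.val - l : ℕ) : ZMod n), ?_, ?_⟩
    · rw [mem_Ival (by omega), ZMod.val_cast_of_lt (by omega)]
      omega
    · have : ((x.val - l : ℕ) : ZMod n) + (l : ZMod n) = ((x.val - l + l : ℕ) : ZMod n) := by
        push_cast; ring
      rw [this]
      have h2 : x.val - l + l = x.val := by omega
      rw [h2, ZMod.natCast_zmod_val]
  · rintro ⟨y, hy, rfl⟩
    rw [mem_Ival (by omega : n - l ≤ n)] at hy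
    have hyv : (y + (l : ZMod n)).val = y.val + l := by
      rw [← ZMod.natCast_zmod_val y]
      rw [← Nat.cast_add, ZMod.val_cast_of_lt (by omega)]
      rw [ZMod.val_cast_of_lt (ZMod.val_lt y)]
    omega

lemma eS_empty {n j : ℕ} : eS n j (∅ : Finset (ZMod n)) = 0 := by
  simp [eS]


lemma sq_split (a : ℕ) : a * a = a * (a - 1) + a := by
  cases' a with k
  · simp
  · simp only [Nat.succ_sub_one]
    ring

lemma eS_le_xi {n j l : ℕ} [NeZero n] (hj1 : 1 ≤ j) (hj2 : 2*j + 2 ≤ n)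
    (S : Finset (ZMod n)) (hcard : S.card = l) (hl2 : l ≤ n) :
    eS n j S ≤ (if l ≤ j + 1 then l * (l - 1) / 2
      else if l ≤ n - j then l * j - j * (j + 1) / 2
      else ((n - l) ^ 2 + (4 * j + 1) * l - (2 * j + 1) * n) / 2) := by
  split_ifs with h1 h2
  · have hE := eS_le_offDiag (n := n) (j := j) (by omega) S
    rw [hcard] at hE
    omega
  · have hmain := main_ub n j S hj1 (by omega) (by omega) (by omega)
    rw [hcard] at hmain
    have hpar : 2 ∣ j * (j + 1) := (Nat.even_mul_succ_self j).two_dvd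
    have hcm : j * l = l * j := Nat.mul_comm _ _
    omega
  · -- l > n - j
    have hl3 : n - j < l := by omega
    have hmc : Sᶜ.card = n - l := by
      rw [Finset.card_compl, ZMod.card, hcard]
    have hid := eS_compl (by omega : j < n) S
    have hE := eS_le_offDiag (n := n) (j := j) (by omega) Sᶜ
    rw [hcard] at hid
    rw [hmc] at hid hE
    have g1 : (n - l)^2 = (n - l) * (n - l) := sq (n - l)
    have g1' := sq_split (n - l)
    have g2 : (4*j+1)*l = 4*(j*l) + l := by ring
    have g3 : (2*j+1)*n = 2*(j*n) + n := by ring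
    have g4 : j*l + j*(n-l) = j*n := by
      have h5 : l + (n - l) = n := by omega
      rw [← Nat.mul_add, h5]
    have g5 : (n-l) * j = j * (n-l) := Nat.mul_comm _ _
    have g6 : l * j = j * l := Nat.mul_comm _ _
    omega

lemma eS_Ival_xi {n j l : ℕ} [NeZero n] (hj1 : 1 ≤ j) (hj2 : 2*j + 2 ≤ n)
    (hl1 : 1 ≤ l) (hl2 : l ≤ n) :
    eS n j (Ival n l) = (if l ≤ j + 1 then l * (l - 1) / 2
      else if l ≤ n - j then l * j - j * (j + 1) / 2
      else ((n - l) ^ 2 + (4 * j + 1) * l - (2 * j + 1) * n) / 2) := by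
  have hcard : (Ival n l).card = l := Ival_card hl2
  split_ifs with h1 h2
  · have hE := eS_le_offDiag (n := n) (j := j) (by omega) (Ival n l)
    rw [hcard] at hE
    have hlb := eS_Ival_lb (n := n) (j := j) (k := l - 1) (by omega) (by omega) hl2
    have hcm : (l-1) * l = l * (l-1) := Nat.mul_comm _ _
    have hll : l * (l - 1 + 1) = l * (l - 1) + l := by ring
    have hl1' : l - 1 + 1 = l := by omega
    rw [hl1'] at hlb
    omega
  · have hmain := main_ub n j (Ival n l) hj1 (by omega) (by omega) (by omega)
    rw [hcard] at hmain
    have hlb := eS_Ival_lb (n := n) (j := j) (k := j) (le_refl j) (by omega) hl2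
    have hcm : j * l = l * j := Nat.mul_comm _ _
    omega
  · -- l > n - j
    have hl3 : n - j < l := by omega
    have hmc : (Ival n l)ᶜ.card = n - l := by
      rw [Finset.card_compl, ZMod.card, hcard]
    have hid := eS_compl (by omega : j < n) (Ival n l)
    rw [hcard, hmc] at hid
    have hcc : eS n j ((Ival n l)ᶜ) = eS n j (Ival n (n - l)) := by
      rw [compl_Ival hl2, eS_shift]
    have hCval : 2 * eS n j (Ival n (n - l)) = (n - l) * (n - l - 1) := by
      rcases Nat.eq_zero_or_pos (n - l) with h0 | hpos
      · rw [h0]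
        have : Ival n 0 = (∅ : Finset (ZMod n)) := by
          simp [Ival]
        rw [this, eS_empty]
      · have hE := eS_le_offDiag (n := n) (j := j) (by omega) (Ival n (n - l))
        rw [Ival_card (by omega)] at hE
        have hlb := eS_Ival_lb (n := n) (j := j) (k := n - l - 1) (l := n - l)
          (by omega) (by omega) (by omega)
        have hcm : (n-l-1) * (n-l-1+1) = (n-l) * (n-l-1) := by
          have : n - l - 1 + 1 = n - l := by omega
          rw [this, Nat.mul_comm]
        have hcm2 : (n-l) * (n-l-1+1) = (n-l) * (n-l-1) + (n - l) := by ring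
        omega
    rw [hcc] at hid
    have g1 : (n - l)^2 = (n - l) * (n - l) := sq (n - l)
    have g1' := sq_split (n - l)
    have g2 : (4*j+1)*l = 4*(j*l) + l := by ring
    have g3 : (2*j+1)*n = 2*(j*n) + n := by ring
    have g4 : j*l + j*(n-l) = j*n := by
      have h5 : l + (n - l) = n := by omega
      rw [← Nat.mul_add, h5]
    have g5 : (n-l) * j = j * (n-l) := Nat.mul_comm _ _
    have g6 : l * j = j * l := Nat.mul_comm _ _
    omega

end Circ

/-- In `G(n; ±{1,…,j})` with `n ≥ 3`, `1 ≤ j < ⌊n/2⌋`, the number of edges in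
a maximum subgraph on `l` vertices (`1 ≤ l ≤ n`) is
`l(l−1)/2` if `l ≤ j+1`; `lj − j(j+1)/2` if `j+1 < l ≤ n−j`; and
`((n−l)² + (4j+1)l − (2j+1)n)/2` if `n−j < l ≤ n`. -/
theorem circulant_maxSub_eq (n j : ℕ) [NeZero n] (hn : 3 ≤ n)
    (hj₁ : 1 ≤ j) (hj₂ : j < n / 2)
    (l : ℕ) (hl₁ : 1 ≤ l) (hl₂ : l ≤ n) :
    maxSub (circulantGraph n j) l =
      if l ≤ j + 1 then l * (l - 1) / 2
      else if l ≤ n - j then l * j - j * (j + 1) / 2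
      else ((n - l) ^ 2 + (4 * j + 1) * l - (2 * j + 1) * n) / 2 := by
  have hj2' : 2 * j + 2 ≤ n := by omega
  set ξ := (if l ≤ j + 1 then l * (l - 1) / 2
      else if l ≤ n - j then l * j - j * (j + 1) / 2
      else ((n - l) ^ 2 + (4 * j + 1) * l - (2 * j + 1) * n) / 2) with hξ
  have hconv : ∀ S : Finset (ZMod n),
      interiorCount (circulantGraph n j) S = Circ.eS n j S :=
    fun S => Circ.interiorCount_eq (by omega) S
  have hub : ∀ c ∈ {c | ∃ S : Finset (ZMod n), S.card = l ∧
      c = interiorCount (circulantGraph n j) S}, c ≤ ξ := by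
    rintro c ⟨S, hS, rfl⟩
    rw [hconv]
    exact Circ.eS_le_xi hj₁ hj2' S hS hl₂
  have hmem : ξ ∈ {c | ∃ S : Finset (ZMod n), S.card = l ∧
      c = interiorCount (circulantGraph n j) S} := by
    refine ⟨Circ.Ival n l, Circ.Ival_card hl₂, ?_⟩
    rw [hconv, Circ.eS_Ival_xi hj₁ hj2' hl₁ hl₂]
  rw [maxSub]
  exact le_antisymm (csSup_le ⟨_, hmem⟩ hub) (le_csSup ⟨ξ, hub⟩ hmem)
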